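/- Consistency of the subgroup g-formula estimator with correctly specified outcome regression: let (Xᵢ, Aᵢ, Yᵢ), i ≥ 1, be i.i.d. copies of (X, A, Y) (with associated potential outcomes satisfying consistency, mean exchangeability and positivity), let w ⊆ 𝒳 be a measurable subgroup with P(X ∈ w) > 0, and let m_a be a version of the outcome regression E[Y | X, A = a]. Then, almost surely, ( Σ_{i=1}^{n} 1{Xᵢ ∈ w} · m_a(Xᵢ) ) / ( Σ_{i=1}^{n} 1{Xᵢ ∈ w} ) converges as n → ∞ to E[Y^a | X ∈ w] = (1/P(X ∈ w)) ∫_{{X ∈ w}} Y^a dP. -/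

import Mathlib

open MeasureTheory Filter Topology
set_option maxHeartbeats 1000000
private lemma div_div_cancel_aux (a b : ℝ) {c : ℝ} (hc : c ≠ 0) : (a/c)/(b/c) = a/b := by
  rcases eq_or_ne b 0 with hb | hb
  · simp [hb]
  · field_simp


/-- Consistency of the subgroup g-formula estimator with correctly
specified outcome regression: the ratio `(Σᵢ 1{Xᵢ ∈ w} m_a(Xᵢ)) / (Σᵢ 1{Xᵢ ∈ w})`
converges almost surely to `E[Y^a | X ∈ w]`. -/
theorem gformula_estimator_consistency
    {Ω : Type*} [MeasurableSpace Ω] (P : Measure Ω) [IsProbabilityMeasure P]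
    {𝒳 : Type*} [MeasurableSpace 𝒳]
    (X : Ω → 𝒳) (hX : Measurable X)
    (A : Ω → ℝ) (hA : Measurable A) (hA01 : ∀ ω, A ω = 0 ∨ A ω = 1)
    (Y : Ω → ℝ) (hY : Measurable Y) (hYint : Integrable Y P)
    (a : ℝ) (ha : a = 0 ∨ a = 1)
    (Y1 Y0 : Ω → ℝ) (hY1m : Measurable Y1) (hY0m : Measurable Y0)
    (hY1int : Integrable Y1 P) (hY0int : Integrable Y0 P)
    (Ya : Ω → ℝ) (hYa : Ya = if a = 1 then Y1 else Y0)
    -- consistency of potential outcomes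
    (hcons : ∀ᵐ ω ∂P, Y ω = A ω * Y1 ω + (1 - A ω) * Y0 ω)
    -- a version of the propensity score
    (e : 𝒳 → ℝ) (he : Measurable e)
    (hePS : ∀ B : Set 𝒳, MeasurableSet B →
      ∫ ω in X ⁻¹' B, e (X ω) ∂P = (P (X ⁻¹' B ∩ {ω | A ω = a})).toReal)
    -- a version of the outcome regression E[Y | X, A = a]
    (m : 𝒳 → ℝ) (hm : Measurable m)
    (hmint : Integrable (fun ω => m (X ω)) P)
    (hmOR : ∀ B : Set 𝒳, MeasurableSet B →
      ∫ ω in X ⁻¹' B ∩ {ω | A ω = a}, Y ω ∂P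
        = ∫ ω in X ⁻¹' B ∩ {ω | A ω = a}, m (X ω) ∂P)
    -- a version of E[Y^a | X]
    (ν : 𝒳 → ℝ) (hν : Measurable ν)
    (hνint : Integrable (fun ω => ν (X ω)) P)
    (hνCE : ∀ B : Set 𝒳, MeasurableSet B →
      ∫ ω in X ⁻¹' B, Ya ω ∂P = ∫ ω in X ⁻¹' B, ν (X ω) ∂P)
    -- mean exchangeability
    (hexch : ∀ B : Set 𝒳, MeasurableSet B →
      ∫ ω in X ⁻¹' B ∩ {ω | A ω = a}, Ya ω ∂P
        = ∫ ω in X ⁻¹' B ∩ {ω | A ω = a}, ν (X ω) ∂P)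
    -- positivity
    (ε : ℝ) (hε : 0 < ε)
    (hpos : ∀ᵐ ω ∂P, ε ≤ e (X ω) ∧ e (X ω) ≤ 1 - ε)
    -- the subgroup, with P(X ∈ w) > 0
    (w : Set 𝒳) (hw : MeasurableSet w)
    (hwpos : 0 < (P (X ⁻¹' w)).toReal)
    -- i.i.d. copies of (X, A, Y)
    (Xs : ℕ → Ω → 𝒳) (As : ℕ → Ω → ℝ) (Ys : ℕ → Ω → ℝ)
    (hmeas : ∀ i, Measurable (fun ω => (Xs i ω, As i ω, Ys i ω)))
    (hindep : ProbabilityTheory.iIndepFun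
      (fun i ω => (Xs i ω, As i ω, Ys i ω)) P)
    (hident : ∀ i, ProbabilityTheory.IdentDistrib
      (fun ω => (Xs i ω, As i ω, Ys i ω)) (fun ω => (X ω, A ω, Y ω)) P P) :
    ∀ᵐ ω ∂P, Tendsto (fun n : ℕ =>
        (∑ i ∈ Finset.range n, (Xs i ⁻¹' w).indicator (fun ω' => m (Xs i ω')) ω)
          / (∑ i ∈ Finset.range n, (Xs i ⁻¹' w).indicator (fun _ => (1 : ℝ)) ω))
      atTop
      (𝓝 ((1 / (P (X ⁻¹' w)).toReal) * ∫ ω' in X ⁻¹' w, Ya ω' ∂P)) := by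
  classical
  -- notation
  set t : Set Ω := {ω | A ω = a} with ht_def
  have htm : MeasurableSet t := hA (measurableSet_singleton a)
  -- Step 1: Y = Ya a.e. on {A = a}
  have hYYa : ∀ᵐ ω ∂P, A ω = a → Y ω = Ya ω := by
    filter_upwards [hcons] with ω hω hAa
    rcases ha with ha | ha
    · have h1 : A ω = 0 := by rw [hAa, ha]
      rw [hYa]; simp [ha, hω, h1]
    · have h1 : A ω = 1 := by rw [hAa, ha]
      rw [hYa]; simp [ha, hω, h1]
  -- Step 2: set integrals of m∘X and ν∘X agree on X⁻¹B ∩ {A = a}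
  have hstep2 : ∀ B : Set 𝒳, MeasurableSet B →
      ∫ ω in X ⁻¹' B ∩ t, m (X ω) ∂P = ∫ ω in X ⁻¹' B ∩ t, ν (X ω) ∂P := by
    intro B hB
    have h1 : ∫ ω in X ⁻¹' B ∩ t, Y ω ∂P = ∫ ω in X ⁻¹' B ∩ t, Ya ω ∂P := by
      refine setIntegral_congr_ae ((hX hB).inter htm) ?_
      filter_upwards [hYYa] with ω hω hmem
      exact hω hmem.2
    rw [← hmOR B hB, h1, hexch B hB]
  -- the sub-σ-algebra generated by X
  have hle : MeasurableSpace.comap X ‹MeasurableSpace 𝒳› ≤ ‹MeasurableSpace Ω› := hX.comap_le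
  have hXmX : Measurable[MeasurableSpace.comap X ‹MeasurableSpace 𝒳›] X := fun s hs => ⟨s, hs, rfl⟩
  -- indicator of {A = a}
  set ind : Ω → ℝ := t.indicator (fun _ => (1:ℝ)) with hind_def
  have hind_meas : Measurable ind := measurable_const.indicator htm
  have hind_int : Integrable ind P := by
    refine Integrable.mono' (integrable_const 1) hind_meas.aestronglyMeasurable ?_
    filter_upwards with ω
    rw [hind_def]
    rcases Set.indicator_eq_zero_or_self t (fun _ => (1:ℝ)) ω with h | h <;> rw [h] <;> norm_num
  -- f * ind integrates as f over the intersection with t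
  have hmul_ind : ∀ (f : Ω → ℝ) (s : Set Ω),
      ∫ ω in s, f ω * ind ω ∂P = ∫ ω in s ∩ t, f ω ∂P := by
    intro f s
    rw [← setIntegral_indicator htm]
    refine integral_congr_ae (Eventually.of_forall fun ω => ?_)
    by_cases hω : ω ∈ t <;> simp [hind_def, Set.indicator_apply, hω]
  -- e ∘ X is integrable
  have heX_bd : ∀ᵐ ω ∂P, ‖e (X ω)‖ ≤ 1 := by
    filter_upwards [hpos] with ω ⟨h1, h2⟩
    rw [Real.norm_eq_abs, abs_le]
    constructor <;> nlinarith
  have heX_int : Integrable (fun ω => e (X ω)) P :=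
    Integrable.mono' (integrable_const 1) (he.comp hX).aestronglyMeasurable heX_bd
  -- Step 4 : e ∘ X is a version of E[ind | MeasurableSpace.comap X ‹MeasurableSpace 𝒳›]
  have hcond : (fun ω => e (X ω)) =ᵐ[P] P[ind | MeasurableSpace.comap X ‹MeasurableSpace 𝒳›] := by
    refine ae_eq_condExp_of_forall_setIntegral_eq hle hind_int
      (fun s _ _ => heX_int.integrableOn) (fun s hs _ => ?_)
      ((he.comp hXmX).stronglyMeasurable.aestronglyMeasurable)
    obtain ⟨B, hB, rfl⟩ := hs
    have : ∫ ω in X ⁻¹' B, ind ω ∂P = ∫ ω in X ⁻¹' B, (1:ℝ) * ind ω ∂P := by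
      simp
    rw [this, hmul_ind (fun _ => (1:ℝ)) (X ⁻¹' B)]
    rw [setIntegral_const]
    simp [hePS B hB, measureReal_def]
  -- the difference d = m∘X - ν∘X
  set d : Ω → ℝ := fun ω => m (X ω) - ν (X ω) with hd_def
  have hd_int : Integrable d P := hmint.sub hνint
  have hd_mX : StronglyMeasurable[MeasurableSpace.comap X ‹MeasurableSpace 𝒳›] d :=
    ((hm.comp hXmX).sub (hν.comp hXmX)).stronglyMeasurable
  have hd_ind_int : Integrable (d * ind) P := by
    refine Integrable.mono' hd_int.abs
      (hd_int.aestronglyMeasurable.mul hind_int.aestronglyMeasurable) ?_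
    filter_upwards with ω
    have : |ind ω| ≤ 1 := by
      rw [hind_def]
      rcases Set.indicator_eq_zero_or_self t (fun _ => (1:ℝ)) ω with h | h <;> rw [h] <;> norm_num
    simp only [Pi.mul_apply, Real.norm_eq_abs, abs_mul]
    calc |d ω| * |ind ω| ≤ |d ω| * 1 :=
          mul_le_mul_of_nonneg_left this (abs_nonneg _)
      _ = |d ω| := mul_one _
  -- pull-out property: P[d * ind | MeasurableSpace.comap X ‹MeasurableSpace 𝒳›] = d * (e ∘ X)
  have hpull : P[d * ind | MeasurableSpace.comap X ‹MeasurableSpace 𝒳›] =ᵐ[P] d * fun ω => e (X ω) := by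
    refine (condExp_mul_of_stronglyMeasurable_left hd_mX hd_ind_int hind_int).trans ?_
    filter_upwards [hcond] with ω hω
    simp [Pi.mul_apply, hω]
  -- tower property consequence: ∫_{X⁻¹B} d·(e∘X) = 0 for all B
  have hzero : ∀ B : Set 𝒳, MeasurableSet B →
      ∫ ω in X ⁻¹' B, d ω * e (X ω) ∂P = 0 := by
    intro B hB
    have hsB : MeasurableSet[MeasurableSpace.comap X ‹MeasurableSpace 𝒳›] (X ⁻¹' B) := ⟨B, hB, rfl⟩
    have h1 : ∫ ω in X ⁻¹' B, d ω * e (X ω) ∂P = ∫ ω in X ⁻¹' B, (d * ind) ω ∂P := by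
      rw [← setIntegral_condExp hle hd_ind_int hsB]
      refine setIntegral_congr_ae (hX hB) ?_
      filter_upwards [hpull] with ω hω _
      rw [hω]; rfl
    rw [h1]
    have h2 : ∫ ω in X ⁻¹' B, (d * ind) ω ∂P = ∫ ω in X ⁻¹' B ∩ t, d ω ∂P :=
      hmul_ind d (X ⁻¹' B)
    rw [h2]
    have := hstep2 B hB
    rw [hd_def]
    rw [integral_sub hmint.integrableOn hνint.integrableOn, this, sub_self]
  -- push forward to 𝒳 and conclude m = ν a.e. w.r.t. the law of X
  set μ : Measure 𝒳 := Measure.map X P with hμ_def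
  haveI : IsProbabilityMeasure μ := Measure.isProbabilityMeasure_map hX.aemeasurable
  set g : 𝒳 → ℝ := fun x => (m x - ν x) * e x with hg_def
  have hg_meas : Measurable g := (hm.sub hν).mul he
  have hgX_int : Integrable (fun ω => g (X ω)) P := by
    refine Integrable.mono' hd_int.abs ((hg_meas.comp hX).aestronglyMeasurable) ?_
    filter_upwards [heX_bd] with ω hω
    simp only [hg_def, Real.norm_eq_abs, abs_mul]
    calc |m (X ω) - ν (X ω)| * |e (X ω)| ≤ |m (X ω) - ν (X ω)| * 1 :=
          mul_le_mul_of_nonneg_left (by simpa [Real.norm_eq_abs] using hω) (abs_nonneg _)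
      _ = |d ω| := mul_one _
  have hg_int : Integrable g μ := by
    rw [hμ_def, integrable_map_measure hg_meas.aestronglyMeasurable hX.aemeasurable]
    exact hgX_int
  have hg_zero : g =ᵐ[μ] 0 := by
    refine hg_int.ae_eq_zero_of_forall_setIntegral_eq_zero (fun B hB _ => ?_)
    rw [hμ_def, setIntegral_map hB hg_meas.aestronglyMeasurable hX.aemeasurable]
    exact hzero B hB
  have hε_μ : ∀ᵐ x ∂μ, ε ≤ e x := by
    rw [hμ_def]
    rw [ae_map_iff hX.aemeasurable (measurableSet_le measurable_const he)]
    filter_upwards [hpos] with ω hω using hω.1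
  have hmν : m =ᵐ[μ] ν := by
    filter_upwards [hg_zero, hε_μ] with x hx hex
    have hexne : e x ≠ 0 := ne_of_gt (lt_of_lt_of_le hε hex)
    have : (m x - ν x) * e x = 0 := hx
    have := mul_eq_zero.mp this
    rcases this with h | h
    · linarith [sub_eq_zero.mp h]
    · exact absurd h hexne
  -- key identity : ∫_{X⁻¹w} m∘X = ∫_{X⁻¹w} Ya
  have hkey : ∫ ω in X ⁻¹' w, m (X ω) ∂P = ∫ ω in X ⁻¹' w, Ya ω ∂P := by
    have h1 : ∫ ω in X ⁻¹' w, m (X ω) ∂P = ∫ x in w, m x ∂μ := by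
      rw [hμ_def, setIntegral_map hw hm.aestronglyMeasurable hX.aemeasurable]
    have h2 : ∫ ω in X ⁻¹' w, ν (X ω) ∂P = ∫ x in w, ν x ∂μ := by
      rw [hμ_def, setIntegral_map hw hν.aestronglyMeasurable hX.aemeasurable]
    have h3 : ∫ x in w, m x ∂μ = ∫ x in w, ν x ∂μ :=
      integral_congr_ae (ae_restrict_of_ae hmν)
    rw [h1, h3, ← h2, ← hνCE w hw]
  -- SLLN setup
  set Z : ℕ → Ω → 𝒳 × ℝ × ℝ := fun i ω => (Xs i ω, As i ω, Ys i ω) with hZ_def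
  set F1 : 𝒳 × ℝ × ℝ → ℝ := fun p => w.indicator m p.1 with hF1_def
  set F2 : 𝒳 × ℝ × ℝ → ℝ := fun p => w.indicator (fun _ => (1:ℝ)) p.1 with hF2_def
  have hF1m : Measurable F1 := (hm.indicator hw).comp measurable_fst
  have hF2m : Measurable F2 := (measurable_const.indicator hw).comp measurable_fst
  have hZXAY : ProbabilityTheory.IdentDistrib (Z 0) (fun ω => (X ω, A ω, Y ω)) P P := hident 0
  -- the two sequences
  have hS1eq : ∀ i ω, (Xs i ⁻¹' w).indicator (fun ω' => m (Xs i ω')) ω = F1 (Z i ω) := by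
    intro i ω
    by_cases hω : Xs i ω ∈ w <;> simp [hF1_def, hZ_def, Set.indicator_apply, hω]
  have hS2eq : ∀ i ω, (Xs i ⁻¹' w).indicator (fun _ => (1:ℝ)) ω = F2 (Z i ω) := by
    intro i ω
    by_cases hω : Xs i ω ∈ w <;> simp [hF2_def, hZ_def, Set.indicator_apply, hω]
  -- integrability of F1 ∘ Z 0 and F2 ∘ Z 0
  have hF1XAY_eq : (fun ω => F1 (X ω, A ω, Y ω)) = (X ⁻¹' w).indicator (fun ω => m (X ω)) := by
    funext ω
    by_cases hω : X ω ∈ w <;> simp [hF1_def, Set.indicator_apply, hω]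
  have hF1XAY_int : Integrable (fun ω => F1 (X ω, A ω, Y ω)) P := by
    rw [hF1XAY_eq]; exact hmint.indicator (hX hw)
  have hF2XAY_int : Integrable (fun ω => F2 (X ω, A ω, Y ω)) P := by
    refine Integrable.mono' (integrable_const 1)
      ((hF2m.comp (hX.prodMk (hA.prodMk hY))).aestronglyMeasurable) ?_
    filter_upwards with ω
    by_cases hω : X ω ∈ w <;> simp [hF2_def, Set.indicator_apply, hω]
  have hid1 : ProbabilityTheory.IdentDistrib (fun ω => F1 (Z 0 ω))
      (fun ω => F1 (X ω, A ω, Y ω)) P P := hZXAY.comp hF1m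
  have hid2 : ProbabilityTheory.IdentDistrib (fun ω => F2 (Z 0 ω))
      (fun ω => F2 (X ω, A ω, Y ω)) P P := hZXAY.comp hF2m
  have hint1 : Integrable (fun ω => F1 (Z 0 ω)) P := hid1.integrable_iff.mpr hF1XAY_int
  have hint2 : Integrable (fun ω => F2 (Z 0 ω)) P := hid2.integrable_iff.mpr hF2XAY_int
  -- pairwise independence and identical distribution
  have hindep1 : Pairwise (Function.onFun (ProbabilityTheory.IndepFun · · P) fun i ω => F1 (Z i ω)) :=
    fun i j hij => (hindep.indepFun hij).comp hF1m hF1m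
  have hindep2 : Pairwise (Function.onFun (ProbabilityTheory.IndepFun · · P) fun i ω => F2 (Z i ω)) :=
    fun i j hij => (hindep.indepFun hij).comp hF2m hF2m
  have hident1 : ∀ i, ProbabilityTheory.IdentDistrib (fun ω => F1 (Z i ω)) (fun ω => F1 (Z 0 ω)) P P :=
    fun i => ((hident i).trans (hident 0).symm).comp hF1m
  have hident2 : ∀ i, ProbabilityTheory.IdentDistrib (fun ω => F2 (Z i ω)) (fun ω => F2 (Z 0 ω)) P P :=
    fun i => ((hident i).trans (hident 0).symm).comp hF2m
  -- SLLN applications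
  have hslln1 := ProbabilityTheory.strong_law_ae_real (fun i ω => F1 (Z i ω)) hint1 hindep1 hident1
  have hslln2 := ProbabilityTheory.strong_law_ae_real (fun i ω => F2 (Z i ω)) hint2 hindep2 hident2
  -- compute the limits
  have hE1 : (∫ x, F1 (Z 0 x) ∂P) = ∫ ω in X ⁻¹' w, m (X ω) ∂P := by
    rw [hid1.integral_eq, hF1XAY_eq, integral_indicator (hX hw)]
  have hE2 : (∫ x, F2 (Z 0 x) ∂P) = (P (X ⁻¹' w)).toReal := by
    rw [hid2.integral_eq]
    have : (fun ω => F2 (X ω, A ω, Y ω)) = (X ⁻¹' w).indicator (fun _ => (1:ℝ)) := by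
      funext ω
      by_cases hω : X ω ∈ w <;> simp [hF2_def, Set.indicator_apply, hω]
    rw [this, integral_indicator (hX hw)]
    simp [measureReal_def]
  -- combine
  beta_reduce at hslln1 hslln2
  filter_upwards [hslln1, hslln2] with ω h1 h2
  have h2' : Tendsto (fun n : ℕ => (∑ i ∈ Finset.range n, F2 (Z i ω)) / n) atTop
      (𝓝 ((P (X ⁻¹' w)).toReal)) := by rwa [hE2] at h2
  have h1' : Tendsto (fun n : ℕ => (∑ i ∈ Finset.range n, F1 (Z i ω)) / n) atTop
      (𝓝 (∫ ω' in X ⁻¹' w, Ya ω' ∂P)) := by rwa [hE1, hkey] at h1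
  have hdiv := h1'.div h2' (ne_of_gt hwpos)
  have hfinal : Tendsto (fun n : ℕ =>
      (∑ i ∈ Finset.range n, F1 (Z i ω)) / (∑ i ∈ Finset.range n, F2 (Z i ω))) atTop
      (𝓝 ((∫ ω' in X ⁻¹' w, Ya ω' ∂P) / (P (X ⁻¹' w)).toReal)) := by
    refine hdiv.congr' ?_
    filter_upwards [eventually_ge_atTop 1] with n hn
    have hn' : (n : ℝ) ≠ 0 := Nat.cast_ne_zero.mpr (by omega)
    exact div_div_cancel_aux _ _ hn'
  have hgoal_eq : (1 / (P (X ⁻¹' w)).toReal) * ∫ ω' in X ⁻¹' w, Ya ω' ∂P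
      = (∫ ω' in X ⁻¹' w, Ya ω' ∂P) / (P (X ⁻¹' w)).toReal := by ring
  rw [hgoal_eq]
  refine hfinal.congr fun n => ?_
  have e1 : (∑ i ∈ Finset.range n, (Xs i ⁻¹' w).indicator (fun ω' => m (Xs i ω')) ω)
      = ∑ i ∈ Finset.range n, F1 (Z i ω) := Finset.sum_congr rfl fun i _ => hS1eq i ω
  have e2 : (∑ i ∈ Finset.range n, (Xs i ⁻¹' w).indicator (fun _ => (1:ℝ)) ω)
      = ∑ i ∈ Finset.range n, F2 (Z i ω) := Finset.sum_congr rfl fun i _ => hS2eq i ω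
  rw [e1, e2]
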